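/- The quantity D₃(n,γ) := [25n³ − 20n²(9−γ²) + 100n(4−γ²) − 16(4−γ²)²] / [5n(n−4−2γ)(n−4+2γ)(5n² − 4n(1+γ²) − 8(4−γ²))] is strictly positive whenever n > 4 + 2γ and γ ∈ (0,1). -/
import Mathlib


/-- Positivity of `D₃(n,γ)` for `n > 4 + 2γ`, `γ ∈ (0,1)`. -/
theorem stmt_9 (n : ℕ) (γ : ℝ) (hγ : γ ∈ Set.Ioo (0:ℝ) 1) (hn : 4 + 2*γ < (n:ℝ)) :
    0 < (25*(n:ℝ)^3 - 20*(n:ℝ)^2*(9 - γ^2) + 100*(n:ℝ)*(4 - γ^2) - 16*(4 - γ^2)^2) /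
        (5*(n:ℝ)*((n:ℝ) - 4 - 2*γ)*((n:ℝ) - 4 + 2*γ) *
          (5*(n:ℝ)^2 - 4*(n:ℝ)*(1 + γ^2) - 8*(4 - γ^2))) := by
  obtain ⟨hγ0, hγ1⟩ := hγ
  have hn5 : (5:ℝ) ≤ n := by
    have : (4:ℝ) < n := by linarith
    exact_mod_cast (by exact_mod_cast this : (4:ℕ) < n)
  have hnum : 0 < 25*(n:ℝ)^3 - 20*(n:ℝ)^2*(9 - γ^2) + 100*(n:ℝ)*(4 - γ^2) - 16*(4 - γ^2)^2 := by
    nlinarith [sq_nonneg γ, sq_nonneg ((n:ℝ) - 5), sq_nonneg ((n:ℝ)*γ), mul_pos hγ0 (sub_pos.mpr hγ1),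
      mul_nonneg (sq_nonneg ((n:ℝ)-5)) (le_of_lt hγ0), sq_nonneg (γ*((n:ℝ)-5))]
  have hd1 : 0 < (n:ℝ) := by linarith
  have hd2 : 0 < (n:ℝ) - 4 - 2*γ := by linarith
  have hd3 : 0 < (n:ℝ) - 4 + 2*γ := by linarith
  have hd4 : 0 < 5*(n:ℝ)^2 - 4*(n:ℝ)*(1 + γ^2) - 8*(4 - γ^2) := by
    nlinarith [sq_nonneg γ, sq_nonneg ((n:ℝ) - 5), mul_pos hγ0 (sub_pos.mpr hγ1)]
  exact div_pos hnum (by positivity)
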